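/- There exists a finite colouring f : ℕ → X (X finite) such that there are no natural numbers x, y, z, all > 1, with f(x) = f(y) = f(z) and x^{y^2} = x^z. -/
import Mathlib

lemma loglog_sq (y : ℕ) (hy : 2 ≤ y) :
    Nat.log 2 (Nat.log 2 (y ^ 2)) = Nat.log 2 (Nat.log 2 y) + 1 := by
  set k := Nat.log 2 y with hk
  have hk1 : 1 ≤ k := Nat.le_log_of_pow_le one_lt_two (by simpa using hy)
  have h1 : 2 ^ k ≤ y := Nat.pow_log_le_self 2 (by omega)
  have h2 : y < 2 ^ (k + 1) := Nat.lt_pow_succ_log_self one_lt_two y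
  have hl : 2 * k ≤ Nat.log 2 (y ^ 2) := by
    apply Nat.le_log_of_pow_le one_lt_two
    calc 2 ^ (2 * k) = (2 ^ k) ^ 2 := by ring
    _ ≤ y ^ 2 := Nat.pow_le_pow_left h1 2
  have hu : Nat.log 2 (y ^ 2) < 2 * k + 2 := by
    apply Nat.log_lt_of_lt_pow (by positivity)
    calc y ^ 2 < (2 ^ (k + 1)) ^ 2 := Nat.pow_lt_pow_left h2 (by norm_num)
    _ = 2 ^ (2 * k + 2) := by ring
  apply Nat.log_eq_of_pow_le_of_lt_pow
  · calc 2 ^ (Nat.log 2 k + 1) = 2 ^ Nat.log 2 k * 2 := by ring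
    _ ≤ k * 2 := by have := Nat.pow_log_le_self 2 (by omega : k ≠ 0); omega
    _ ≤ Nat.log 2 (y ^ 2) := by omega
  · have := Nat.lt_pow_succ_log_self one_lt_two k
    calc Nat.log 2 (y ^ 2) < 2 * k + 2 := hu
    _ = 2 * (k + 1) := by ring
    _ ≤ 2 * 2 ^ (Nat.log 2 k + 1) := by omega
    _ = 2 ^ (Nat.log 2 k + 2) := by ring

theorem exists_colouring_no_mono_x_pow_ysq_eq_x_pow_z :
    ∃ (X : Type) (_ : Finite X) (f : ℕ → X),
      ¬ ∃ x y z : ℕ, 1 < x ∧ 1 < y ∧ 1 < z ∧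
        f x = f y ∧ f x = f z ∧ x ^ (y ^ 2) = x ^ z := by
  refine ⟨ZMod 2, inferInstance, fun n => (Nat.log 2 (Nat.log 2 n) : ZMod 2), ?_⟩
  rintro ⟨x, y, z, hx, hy, hz, hxy, hxz, heq⟩
  have hzy : z = y ^ 2 := (Nat.pow_right_injective hx heq).symm
  subst hzy
  rw [hxy] at hxz
  simp only [loglog_sq y hy] at hxz
  push_cast at hxz
  simp at hxz
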